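/- Let φ0(x) = π^{-1/4}·exp(−x²/2) and φ2(x) = 2^{-1/2}·π^{-1/4}·(2x² − 1)·exp(−x²/2) be the normalized Hermite functions of orders 0 and 2, and define ψ_h(x,y) = (1/√2)·φ0(x)·φ0(y) + (1/2)·(φ0(x)·φ2(y) + φ2(x)·φ0(y)). Then ψ_h is not a product wavefunction: there do not exist functions f, g : ℝ → ℝ such that ψ_h(x,y) = f(x)·g(y) for all x, y ∈ ℝ. (The photonic qutrit state |ψ_h⟩ = |00⟩/√2 + (|02⟩ + |20⟩)/2 is entangled even though its bit quadrature correlations vanish.) -/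

import Mathlib

open Real

/-- The photonic qutrit state `|ψ_h⟩ = |00⟩/√2 + (|02⟩ + |20⟩)/2` is
entangled: its wavefunction
`ψ_h(x,y) = (1/√2)·φ0(x)φ0(y) + (1/2)·(φ0(x)φ2(y) + φ2(x)φ0(y))` is not a
product `f(x)·g(y)` of single-variable functions. -/
theorem qutrit_state_not_product
    (phi0 phi2 : ℝ → ℝ)
    (hphi0 : ∀ x : ℝ, phi0 x = π ^ (-(1 : ℝ) / 4) * Real.exp (-x ^ 2 / 2))
    (hphi2 : ∀ x : ℝ, phi2 x =
      (2 : ℝ) ^ (-(1 : ℝ) / 2) * π ^ (-(1 : ℝ) / 4) * (2 * x ^ 2 - 1) *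
        Real.exp (-x ^ 2 / 2))
    (psi : ℝ → ℝ → ℝ)
    (hpsi : ∀ x y : ℝ, psi x y =
      (1 / Real.sqrt 2) * phi0 x * phi0 y +
        (1 / 2) * (phi0 x * phi2 y + phi2 x * phi0 y)) :
    ¬ ∃ f g : ℝ → ℝ, ∀ x y : ℝ, psi x y = f x * g y := by
  rintro ⟨f, g, hfg⟩
  have hs : (2 : ℝ) ^ (-(1 : ℝ) / 2) = (Real.sqrt 2)⁻¹ := by
    rw [show (-(1 : ℝ) / 2) = -(1 / 2) by ring, Real.rpow_neg (by norm_num),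
      ← Real.sqrt_eq_rpow]
  have ha : (0:ℝ) < π ^ (-(1 : ℝ) / 4) := Real.rpow_pos_of_pos Real.pi_pos _
  have hsq : Real.sqrt 2 ≠ 0 := by positivity
  -- ψ(0,0) = 0
  have h00 : psi 0 0 = 0 := by
    rw [hpsi, hphi0, hphi2, hs]
    field_simp
    ring
  -- ψ(0,1) ≠ 0
  have h01 : psi 0 1 ≠ 0 := by
    rw [hpsi, hphi0 0, hphi0 1, hphi2 0, hphi2 1, hs]
    have : ((1:ℝ) / Real.sqrt 2) * (π ^ (-(1 : ℝ) / 4) * Real.exp (-0 ^ 2 / 2)) *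
        (π ^ (-(1 : ℝ) / 4) * Real.exp (-1 ^ 2 / 2)) +
        (1 / 2) * ((π ^ (-(1 : ℝ) / 4) * Real.exp (-0 ^ 2 / 2)) *
          ((Real.sqrt 2)⁻¹ * π ^ (-(1 : ℝ) / 4) * (2 * 1 ^ 2 - 1) * Real.exp (-1 ^ 2 / 2)) +
          ((Real.sqrt 2)⁻¹ * π ^ (-(1 : ℝ) / 4) * (2 * 0 ^ 2 - 1) * Real.exp (-0 ^ 2 / 2)) *
          (π ^ (-(1 : ℝ) / 4) * Real.exp (-1 ^ 2 / 2))) =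
        (1 / Real.sqrt 2) * (π ^ (-(1 : ℝ) / 4))^2 * Real.exp 0 * Real.exp (-1/2) := by
      field_simp
      ring
    rw [this]
    positivity
  -- ψ(1,0) ≠ 0
  have h10 : psi 1 0 ≠ 0 := by
    rw [hpsi, hphi0 0, hphi0 1, hphi2 0, hphi2 1, hs]
    have : ((1:ℝ) / Real.sqrt 2) * (π ^ (-(1 : ℝ) / 4) * Real.exp (-1 ^ 2 / 2)) *
        (π ^ (-(1 : ℝ) / 4) * Real.exp (-0 ^ 2 / 2)) +
        (1 / 2) * ((π ^ (-(1 : ℝ) / 4) * Real.exp (-1 ^ 2 / 2)) *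
          ((Real.sqrt 2)⁻¹ * π ^ (-(1 : ℝ) / 4) * (2 * 0 ^ 2 - 1) * Real.exp (-0 ^ 2 / 2)) +
          ((Real.sqrt 2)⁻¹ * π ^ (-(1 : ℝ) / 4) * (2 * 1 ^ 2 - 1) * Real.exp (-1 ^ 2 / 2)) *
          (π ^ (-(1 : ℝ) / 4) * Real.exp (-0 ^ 2 / 2))) =
        (1 / Real.sqrt 2) * (π ^ (-(1 : ℝ) / 4))^2 * Real.exp 0 * Real.exp (-1/2) := by
      field_simp
      ring
    rw [this]
    positivity
  have hf0 : f 0 ≠ 0 := fun h => h01 (by rw [hfg 0 1, h, zero_mul])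
  have hg0 : g 0 ≠ 0 := fun h => h10 (by rw [hfg 1 0, h, mul_zero])
  exact mul_ne_zero hf0 hg0 ((hfg 0 0) ▸ h00)
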